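/- Let U = e₀ = (1,0,0,0) ∈ ℝ⁴ and N = (0, n) ∈ ℝ⁴ with n ∈ ℝ³, |n| = 1 (so that g(U,U) = −1, g(N,N) = 1, g(U,N) = 0 for g = diag(−1,1,1,1)); let θ > 0 and η, ζ̃, σ, χ, μ ∈ ℝ. Then the 5×5 rest-frame matrices of contracted principal coefficients, (B^{aβcδ}U_βU_δ)_{a,c=0..4} and (B^{aβcδ}N_βN_δ)_{a,c=0..4}, equal the block-diagonal matrices diag(−χθ², −σθ I₃, −μ) and diag(χθ², ηθ I₃ + ((1/3)η + ζ̃)θ n nᵀ, μ), respectively, where B^{αβγδ} := U^αU^β(−χθ²U^γU^δ + σθΠ^{γδ}) + Π^{αβ}(−χθ²U^γU^δ + ζ̃θΠ^{γδ}) + χθ²(Π^{αδ}U^β + Π^{βδ}U^α)U^γ − σθ(Π^{αγ}U^β + Π^{βγ}U^α)U^δ + ηθ(Π^{αγ}Π^{βδ} + Π^{αδ}Π^{βγ} − (2/3)Π^{αβ}Π^{γδ}) for α,γ ∈ {0,..,3}, B^{4β4δ} := −μU^βU^δ + μΠ^{βδ}, and B^{αβ4δ} = B^{4βγδ} := 0,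 with Π^{αγ} = g^{αγ} + U^αU^γ. -/
import Mathlib


open scoped BigOperators

/-- The Minkowski metric `diag(-1,1,1,1)` (diagonal entries). -/
noncomputable def gmink : Fin 4 → ℝ := fun i => if i = 0 then -1 else 1

/-- The spatial projector `Π^{αγ} = g^{αγ} + U^α U^γ`. -/
noncomputable def proj (U : Fin 4 → ℝ) : Fin 4 → Fin 4 → ℝ :=
  fun α γ => (if α = γ then gmink α else 0) + U α * U γ

/-- The second-order coefficient tensor `B^{αβγδ}`, α, γ ∈ {0,…,3}. -/
noncomputable def BB (U : Fin 4 → ℝ) (θ η ζt σ χ : ℝ) :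
    Fin 4 → Fin 4 → Fin 4 → Fin 4 → ℝ := fun α β γ δ =>
  U α * U β * (-(χ * θ ^ 2) * U γ * U δ + σ * θ * proj U γ δ)
  + proj U α β * (-(χ * θ ^ 2) * U γ * U δ + ζt * θ * proj U γ δ)
  + χ * θ ^ 2 * (proj U α δ * U β + proj U β δ * U α) * U γ
  - σ * θ * (proj U α γ * U β + proj U β γ * U α) * U δ
  + η * θ * (proj U α γ * proj U β δ + proj U α δ * proj U β γ
      - (2/3) * proj U α β * proj U γ δ)

/-- The coefficient tensor `B^{4β4δ} = −μ U^β U^δ + μ Π^{βδ}`. -/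
noncomputable def BB4 (U : Fin 4 → ℝ) (μ : ℝ) : Fin 4 → Fin 4 → ℝ := fun β δ =>
  -μ * U β * U δ + μ * proj U β δ

/-- The full principal coefficient tensor `B^{aβcδ}`, a, c ∈ {0,…,4},
with `B^{αβ4δ} = B^{4βγδ} = 0`. -/
noncomputable def B5 (U : Fin 4 → ℝ) (θ η ζt σ χ μ : ℝ) :
    Fin 5 → Fin 4 → Fin 5 → Fin 4 → ℝ := fun a β c δ =>
  if ha : (a : ℕ) < 4 then
    if hc : (c : ℕ) < 4 then BB U θ η ζt σ χ ⟨a, ha⟩ β ⟨c, hc⟩ δ else 0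
  else
    if (c : ℕ) < 4 then 0 else BB4 U μ β δ


private lemma consN0 (n : Fin 3 → ℝ) : (Fin.cons 0 n : Fin 4 → ℝ) 0 = 0 := rfl
private lemma consN1 (n : Fin 3 → ℝ) : (Fin.cons 0 n : Fin 4 → ℝ) 1 = n 0 := rfl
private lemma consN2 (n : Fin 3 → ℝ) : (Fin.cons 0 n : Fin 4 → ℝ) 2 = n 1 := rfl
private lemma consN3 (n : Fin 3 → ℝ) : (Fin.cons 0 n : Fin 4 → ℝ) 3 = n 2 := rfl
private lemma snoc0 (n : Fin 3 → ℝ) : (Fin.snoc n 0 : Fin 4 → ℝ) 0 = n 0 := rfl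
private lemma snoc1 (n : Fin 3 → ℝ) : (Fin.snoc n 0 : Fin 4 → ℝ) 1 = n 1 := rfl
private lemma snoc2 (n : Fin 3 → ℝ) : (Fin.snoc n 0 : Fin 4 → ℝ) 2 = n 2 := rfl
private lemma snoc3 (n : Fin 3 → ℝ) : (Fin.snoc n 0 : Fin 4 → ℝ) 3 = 0 := rfl
private lemma n5_0 (n : Fin 3 → ℝ) : (Fin.cons 0 (Fin.snoc n 0) : Fin 5 → ℝ) 0 = 0 := rfl
private lemma n5_1 (n : Fin 3 → ℝ) : (Fin.cons 0 (Fin.snoc n 0) : Fin 5 → ℝ) 1 = n 0 := rfl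
private lemma n5_2 (n : Fin 3 → ℝ) : (Fin.cons 0 (Fin.snoc n 0) : Fin 5 → ℝ) 2 = n 1 := rfl
private lemma n5_3 (n : Fin 3 → ℝ) : (Fin.cons 0 (Fin.snoc n 0) : Fin 5 → ℝ) 3 = n 2 := rfl
private lemma n5_4 (n : Fin 3 → ℝ) : (Fin.cons 0 (Fin.snoc n 0) : Fin 5 → ℝ) 4 = 0 := rfl

set_option maxHeartbeats 2000000 in
/-- Rest-frame 5×5 matrices of contracted principal coefficients: with `U = e₀`
and `N = (0, n)`, `|n| = 1`, the matrices `B^{aβcδ}U_βU_δ` and `B^{aβcδ}N_βN_δ`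
are `diag(−χθ², −σθ I₃, −μ)` and `diag(χθ², ηθ I₃ + ((1/3)η + ζ̃)θ n nᵀ, μ)`. -/
theorem stmt18 (θ η ζt σ χ μ : ℝ) (hθ : 0 < θ)
    (n : Fin 3 → ℝ) (hn : ∑ i, n i ^ 2 = 1) :
    (let U : Fin 4 → ℝ := fun β => if β = 0 then 1 else 0
     let N : Fin 4 → ℝ := Fin.cons 0 n
     -- `n` extended to an index running over all five fields (zero on fields 0 and 4)
     let n5 : Fin 5 → ℝ := Fin.cons 0 (Fin.snoc n 0)
     let targetU : Fin 5 → Fin 5 → ℝ := fun a c =>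
       if a = c then
         (if (a : ℕ) = 0 then -(χ * θ ^ 2) else if (a : ℕ) = 4 then -μ else -(σ * θ))
       else 0
     let targetN : Fin 5 → Fin 5 → ℝ := fun a c =>
       (if a = c then
          (if (a : ℕ) = 0 then χ * θ ^ 2 else if (a : ℕ) = 4 then μ else η * θ)
        else 0)
       + ((1/3) * η + ζt) * θ * n5 a * n5 c
     (∀ a c : Fin 5,
        (∑ β, ∑ δ, B5 U θ η ζt σ χ μ a β c δ * (gmink β * U β) * (gmink δ * U δ))
          = targetU a c) ∧
     (∀ a c : Fin 5,
        (∑ β, ∑ δ, B5 U θ η ζt σ χ μ a β c δ * (gmink β * N β) * (gmink δ * N δ))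
          = targetN a c)) := by
  have hn' : n 0 ^ 2 + n 1 ^ 2 + n 2 ^ 2 = 1 := by
    simpa [Fin.sum_univ_three] using hn
  constructor
  · intro a c
    fin_cases a <;> fin_cases c <;>
      simp [B5, BB, BB4, proj, gmink, Fin.sum_univ_four] <;> ring
  · intro a c
    fin_cases a <;> fin_cases c <;>
      simp [B5, BB, BB4, proj, gmink, Fin.sum_univ_four, consN0, consN1, consN2, consN3,
        n5_0, n5_1, n5_2, n5_3, n5_4, snoc0, snoc1, snoc2, snoc3] <;>
      first
        | ring1
        | linear_combination (η * θ) * hn'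
        | linear_combination (χ * θ ^ 2) * hn'
        | linear_combination μ * hn'
        | nlinarith [hn', sq_nonneg (n 0), sq_nonneg (n 1), sq_nonneg (n 2)]
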